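/- Let S_t = σ_t(M_t) be an information state with cost distribution ρ and let Λ^n be the n-th iterate of the operator 𝒯 starting from Λ^0 ≡ 0. Then for every n ∈ ℕ, every t ∈ ℕ and every realization m_t of the memory: γ^{n+t}·c^min/(1−γ) + γ^t·Λ^n(σ_t(m_t), γ^t) + sup_{a_t ∈ [[A_t | m_t]]} a_t ≤ V_t(m_t) ≤ sup_{a_t ∈ [[A_t | m_t]]} a_t + γ^t·Λ^n(σ_t(m_t), γ^t) + γ^{n+t}·c^max/(1−γ). -/

import Mathlib

open Set Filter

noncomputable section

/-- Hausdorff distance built from an arbitrary distance function `η`,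
`ℋ(A,B) = max{sup_{a∈A} inf_{b∈B} η a b, sup_{b∈B} inf_{a∈A} η a b}`. -/
def hausd {α : Type*} (η : α → α → ℝ) (A B : Set α) : ℝ :=
  max (sSup ((fun a => sInf ((fun b => η a b) '' B)) '' A))
      (sSup ((fun b => sInf ((fun a => η a b) '' A)) '' B))

/-- The time-invariant DP operator `𝒯` for general information states:
`[𝒯Λ](s,z) = inf_u sup_{c,s'} (c + γ·Λ(s',γz) + ρ(c,s'|s,u)/z)`, the sup being over the
support of the cost distribution `ρ` (off the support `ρ = −∞`). -/
def DPop {Ss Uu : Type*} (γ : ℝ) (ρ : ℝ → Ss → Ss → Uu → EReal)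
    (Λ : Ss → ℝ → ℝ) (s : Ss) (z : ℝ) : ℝ :=
  sInf (Set.range fun u : Uu => sSup ((fun p : ℝ × Ss =>
    p.1 + γ * Λ p.2 (γ * z) + (ρ p.1 p.2 s u).toReal / z) '' {p | ρ p.1 p.2 s u ≠ ⊥}))

/-- Iterates `Λ^n = 𝒯^n Λ^0` starting from `Λ^0 ≡ 0`. -/
def DPopIter {Ss Uu : Type*} (γ : ℝ) (ρ : ℝ → Ss → Ss → Uu → EReal) : ℕ → Ss → ℝ → ℝ
  | 0 => fun _ _ => 0
  | (n+1) => DPop γ ρ (DPopIter γ ρ n)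

/-- The law-dependent operator `𝒯(π)`. -/
def DPopLaw {Ss Uu : Type*} (γ : ℝ) (ρ : ℝ → Ss → Ss → Uu → EReal) (π : Ss → ℝ → Uu)
    (Λ : Ss → ℝ → ℝ) (s : Ss) (z : ℝ) : ℝ :=
  sSup ((fun p : ℝ × Ss =>
    p.1 + γ * Λ p.2 (γ * z) + (ρ p.1 p.2 s (π s z)).toReal / z) '' {p | ρ p.1 p.2 s (π s z) ≠ ⊥})

/-- Iterates `𝒯(π)^n Λ^0` starting from `Λ^0 ≡ 0`. -/
def DPopLawIter {Ss Uu : Type*} (γ : ℝ) (ρ : ℝ → Ss → Ss → Uu → EReal) (π : Ss → ℝ → Uu) :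
    ℕ → Ss → ℝ → ℝ
  | 0 => fun _ _ => 0
  | (n+1) => DPopLaw γ ρ π (DPopLawIter γ ρ π n)

/-- The time-invariant DP operator `𝒯̄` for problems with observable costs:
`[𝒯̄Λ̄](s̄) = inf_u sup_{(c,s̄') ∈ F(s̄,u)} (c + γ·Λ̄(s̄'))` where `F s̄ u = [[C, S̄' | s̄, u]]`. -/
def DPopB {Sb Uu : Type*} (γ : ℝ) (F : Sb → Uu → Set (ℝ × Sb)) (Λ : Sb → ℝ) (s : Sb) : ℝ :=
  sInf (Set.range fun u : Uu => sSup ((fun p : ℝ × Sb => p.1 + γ * Λ p.2) '' F s u))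

/-- Iterates `Λ̄^n = 𝒯̄^n Λ̄^0` starting from `Λ̄^0 ≡ 0`. -/
def DPopBIter {Sb Uu : Type*} (γ : ℝ) (F : Sb → Uu → Set (ℝ × Sb)) : ℕ → Sb → ℝ
  | 0 => fun _ => 0
  | (n+1) => DPopB γ F (DPopBIter γ F n)

/-- The law-dependent observable-cost operator. -/
def DPopBLaw {Sb Uu : Type*} (γ : ℝ) (F : Sb → Uu → Set (ℝ × Sb)) (π : Sb → Uu)
    (Λ : Sb → ℝ) (s : Sb) : ℝ :=
  sSup ((fun p : ℝ × Sb => p.1 + γ * Λ p.2) '' F s (π s))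

/-- `β_t(T)` error coefficients, fuel-indexed: `beta γ e k t = β_t(t+k)` with
`β_T(T) = γ^T·e` and `β_t(T) = β_{t+1}(T) + γ^t·e`. -/
def beta (γ e : ℝ) : ℕ → ℕ → ℝ
  | 0, t => γ ^ t * e
  | (k+1), t => beta γ e k (t+1) + γ ^ t * e

/-- A partially observed non-stochastic input–output system with bounded costs:
disturbances `W_t ∈ 𝒲`, actions `U_t ∈ 𝒰`, observations `Y_0 = h_0(W_0)`,
`Y_{t+1} = h_{t+1}(W_{0:t}, U_{0:t})`, and costs `C_t = d_t(W_{0:t}, U_{0:t}) ∈ 𝒞 ⊆ [cmin, cmax] ⊂ ℝ≥0`,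
with a discount factor `γ ∈ (0,1)`. -/
structure Sys where
  W : Type
  U : Type
  Y : Type
  [hW : Nonempty W]
  [hU : Nonempty U]
  [hY : Nonempty Y]
  γ : ℝ
  cmin : ℝ
  cmax : ℝ
  h0 : W → Y
  h : (t : ℕ) → (Fin (t+1) → W) → (Fin (t+1) → U) → Y
  d : (t : ℕ) → (Fin (t+1) → W) → (Fin (t+1) → U) → ℝ
  hγ0 : 0 < γ
  hγ1 : γ < 1
  hcmin : 0 ≤ cmin
  hcost : ∀ t ω υ, d t ω υ ∈ Set.Icc cmin cmax

attribute [instance] Sys.hW Sys.hU Sys.hY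

namespace Sys

variable (S : Sys)

/-- `a^max = c^max/(1-γ)`. -/
def amax : ℝ := S.cmax / (1 - S.γ)

/-- Memory space at time `t`: `M_t = (Y_{0:t}, U_{0:t-1})`. -/
abbrev Mem (t : ℕ) : Type := (Fin (t+1) → S.Y) × (Fin t → S.U)

/-- Control strategies `g = (g_0, g_1, …)`, `U_t = g_t(M_t)`. -/
abbrev Strat : Type := (t : ℕ) → S.Mem t → S.U

/-- The memory realization at time `0` generated by an initial observation `y_0`. -/
def mem0 (y : S.Y) : S.Mem 0 := (fun _ => y, Fin.elim0)

/-- Open-loop observation `Y_s` generated by disturbances `ω` and actions `u_{0:s-1}`. -/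
def oy (ω : ℕ → S.W) : (s : ℕ) → (Fin s → S.U) → S.Y
  | 0, _ => S.h0 (ω 0)
  | (t+1), υ => S.h t (fun i : Fin (t+1) => ω i) υ

/-- Open-loop cost `C_t` generated by disturbances `ω` and actions `u_{0:t}`. -/
def oc (ω : ℕ → S.W) (t : ℕ) (υ : Fin (t+1) → S.U) : ℝ :=
  S.d t (fun i : Fin (t+1) => ω i) υ

/-- Open-loop accrued cost `A_t = Σ_{ℓ<t} γ^ℓ C_ℓ`. -/
def oA (ω : ℕ → S.W) (t : ℕ) (υ : Fin t → S.U) : ℝ :=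
  ∑ ℓ : Fin t, S.γ ^ (ℓ : ℕ) *
    S.oc ω ℓ (fun j : Fin ((ℓ : ℕ) + 1) => υ ⟨j, by have := j.isLt; have := ℓ.isLt; omega⟩)

/-- Open-loop memory at time `t` generated by disturbances `ω` and actions `u_{0:t-1}`. -/
def omem (ω : ℕ → S.W) (t : ℕ) (υ : Fin t → S.U) : S.Mem t :=
  (fun i : Fin (t+1) =>
    S.oy ω i (fun j : Fin (i : ℕ) => υ ⟨j, by have := j.isLt; have := i.isLt; omega⟩), υ)

/-- Disturbance realizations consistent with the memory realization `m_t`. -/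
def consistent (t : ℕ) (m : S.Mem t) : Set (ℕ → S.W) := {ω | S.omem ω t m.2 = m}

/-- `[[A_t | m_t]]`, the conditional range of the accrued cost. -/
def Arange (t : ℕ) (m : S.Mem t) : Set ℝ :=
  (fun ω => S.oA ω t m.2) '' S.consistent t m

/-- Closed-loop memory `M_t` generated by strategy `g` and disturbances `ω`. -/
def memOf (g : S.Strat) (ω : ℕ → S.W) : (t : ℕ) → S.Mem t
  | 0 => (fun _ => S.h0 (ω 0), Fin.elim0)
  | (t+1) =>
    let m := memOf g ω t
    let us : Fin (t+1) → S.U := Fin.snoc m.2 (g t m)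
    (Fin.snoc m.1 (S.h t (fun i : Fin (t+1) => ω i) us), us)

/-- Closed-loop action `U_t = g_t(M_t)`. -/
def act (g : S.Strat) (ω : ℕ → S.W) (t : ℕ) : S.U := g t (S.memOf g ω t)

/-- Closed-loop cost `C_t`. -/
def ccost (g : S.Strat) (ω : ℕ → S.W) (t : ℕ) : ℝ :=
  S.d t (fun i : Fin (t+1) => ω i) (fun i : Fin (t+1) => S.act g ω i)

/-- Closed-loop accrued cost `A_t = Σ_{ℓ<t} γ^ℓ C_ℓ`. -/
def cA (g : S.Strat) (ω : ℕ → S.W) (t : ℕ) : ℝ :=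
  ∑ ℓ ∈ Finset.range t, S.γ ^ ℓ * S.ccost g ω ℓ

/-- Closed-loop cost-to-go `C_t^∞ = Σ_{ℓ≥t} γ^{ℓ-t} C_ℓ`. -/
def cCinf (g : S.Strat) (ω : ℕ → S.W) (t : ℕ) : ℝ :=
  ∑' k : ℕ, S.γ ^ k * S.ccost g ω (t + k)

/-- Strategy value function
`V_t^g(m_t) = sup_{(a,c^∞) ∈ [[A_t, C_t^∞ | m_t]]^g} (a + γ^t c^∞)`. -/
def V (g : S.Strat) (t : ℕ) (m : S.Mem t) : ℝ :=
  sSup ((fun ω => S.cA g ω t + S.γ ^ t * S.cCinf g ω t) '' {ω | S.memOf g ω t = m})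

/-- Optimal value function `V_t(m_t) = inf_g V_t^g(m_t)`
(the infimum over strategies consistent with the realization `m_t`). -/
def Vopt (t : ℕ) (m : S.Mem t) : ℝ :=
  sInf ((fun g => S.V g t m) '' {g : S.Strat | ∃ ω, S.memOf g ω t = m})

/-- Strategy-dependent finite-horizon function, fuel-indexed:
`Jg g n t m = J_t^g(m_t; t+n)` with `J_T^g(m_T;T) = sup_{[[A_T,C_T|m_T]]^g}(a_T + γ^T c_T)` and
`J_t^g(m_t;T) = sup_{m_{t+1} ∈ [[M_{t+1}|m_t]]^g} J_{t+1}^g(m_{t+1};T)`. -/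
def Jg (g : S.Strat) : ℕ → (t : ℕ) → S.Mem t → ℝ
  | 0, t, m => sSup ((fun ω => S.cA g ω t + S.γ ^ t * S.ccost g ω t) '' {ω | S.memOf g ω t = m})
  | (n+1), t, m =>
    sSup ((fun ω => Jg g n (t+1) (S.memOf g ω (t+1))) '' {ω | S.memOf g ω t = m})

/-- Optimal finite-horizon function, fuel-indexed: `Jopt n t m = J_t(m_t; t+n)` with
`J_T(m_T;T) = inf_{u_T} sup_{[[A_T,C_T|m_T,u_T]]}(a_T + γ^T c_T)` and
`J_t(m_t;T) = inf_{u_t} sup_{m_{t+1} ∈ [[M_{t+1}|m_t,u_t]]} J_{t+1}(m_{t+1};T)`. -/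
def Jopt : ℕ → (t : ℕ) → S.Mem t → ℝ
  | 0, t, m => sInf (Set.range fun u : S.U =>
      sSup ((fun ω => S.oA ω t m.2 + S.γ ^ t * S.oc ω t (Fin.snoc m.2 u)) '' S.consistent t m))
  | (n+1), t, m => sInf (Set.range fun u : S.U =>
      sSup ((fun ω => Jopt n (t+1) (S.omem ω (t+1) (Fin.snoc m.2 u))) '' S.consistent t m))

/-- The conditional accrued distribution `r_t((c,s) | m_t, u_t)` of the pair
`(C_t, S_{t+1})` where `S_{t+1} = σ_{t+1}(M_{t+1})`:
`r_t(x|y) = sup_{a ∈ [0,a^max]}(a + 𝕀(x,a|y)) − sup_{a ∈ [0,a^max]}(a + 𝕀(a|y))` in `ℝ ∪ {−∞}`. -/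
def rcs {Ss : Type*} (σ : (t : ℕ) → S.Mem t → Ss) (t : ℕ) (c : ℝ) (s : Ss)
    (m : S.Mem t) (u : S.U) : EReal :=
  sSup ((fun a : ℝ => (a : EReal)) '' {a | a ∈ Set.Icc 0 S.amax ∧ ∃ ω ∈ S.consistent t m,
      S.oc ω t (Fin.snoc m.2 u) = c ∧ σ (t+1) (S.omem ω (t+1) (Fin.snoc m.2 u)) = s ∧
      S.oA ω t m.2 = a}) -
  sSup ((fun a : ℝ => (a : EReal)) '' {a | a ∈ Set.Icc 0 S.amax ∧ ∃ ω ∈ S.consistent t m,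
      S.oA ω t m.2 = a})

/-! ### Observable costs -/

/-- Memory space with observable costs: `M_t = (Y_{0:t}, C_{0:t-1}, U_{0:t-1})`. -/
abbrev MemO (t : ℕ) : Type := (Fin (t+1) → S.Y) × (Fin t → ℝ) × (Fin t → S.U)

/-- Strategies for the observable-cost problem. -/
abbrev StratO : Type := (t : ℕ) → S.MemO t → S.U

/-- The observable-cost memory realization at time `0` from an initial observation. -/
def memO0 (y : S.Y) : S.MemO 0 := (fun _ => y, Fin.elim0, Fin.elim0)

/-- Open-loop observable-cost memory generated by `ω` and actions `u_{0:t-1}`. -/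
def omemO (ω : ℕ → S.W) (t : ℕ) (υ : Fin t → S.U) : S.MemO t :=
  (fun i : Fin (t+1) =>
      S.oy ω i (fun j : Fin (i : ℕ) => υ ⟨j, by have := j.isLt; have := i.isLt; omega⟩),
   fun ℓ : Fin t =>
      S.oc ω ℓ (fun j : Fin ((ℓ : ℕ) + 1) => υ ⟨j, by have := j.isLt; have := ℓ.isLt; omega⟩),
   υ)

/-- Disturbances consistent with an observable-cost memory realization. -/
def consistentO (t : ℕ) (m : S.MemO t) : Set (ℕ → S.W) := {ω | S.omemO ω t m.2.2 = m}

/-- `[[A_t | m_t]]` for the observable-cost problem. -/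
def ArangeO (t : ℕ) (m : S.MemO t) : Set ℝ :=
  (fun ω => S.oA ω t m.2.2) '' S.consistentO t m

/-- Closed-loop observable-cost memory. -/
def memOfO (g : S.StratO) (ω : ℕ → S.W) : (t : ℕ) → S.MemO t
  | 0 => (fun _ => S.h0 (ω 0), Fin.elim0, Fin.elim0)
  | (t+1) =>
    let m := memOfO g ω t
    let us : Fin (t+1) → S.U := Fin.snoc m.2.2 (g t m)
    (Fin.snoc m.1 (S.h t (fun i : Fin (t+1) => ω i) us),
     Fin.snoc m.2.1 (S.d t (fun i : Fin (t+1) => ω i) us), us)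

/-- Closed-loop action for the observable-cost problem. -/
def actO (g : S.StratO) (ω : ℕ → S.W) (t : ℕ) : S.U := g t (S.memOfO g ω t)

/-- Closed-loop cost for the observable-cost problem. -/
def ccostO (g : S.StratO) (ω : ℕ → S.W) (t : ℕ) : ℝ :=
  S.d t (fun i : Fin (t+1) => ω i) (fun i : Fin (t+1) => S.actO g ω i)

/-- Closed-loop accrued cost for the observable-cost problem. -/
def cAO (g : S.StratO) (ω : ℕ → S.W) (t : ℕ) : ℝ :=
  ∑ ℓ ∈ Finset.range t, S.γ ^ ℓ * S.ccostO g ω ℓ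

/-- Closed-loop cost-to-go for the observable-cost problem. -/
def cCinfO (g : S.StratO) (ω : ℕ → S.W) (t : ℕ) : ℝ :=
  ∑' k : ℕ, S.γ ^ k * S.ccostO g ω (t + k)

/-- Strategy value function for the observable-cost problem. -/
def VO (g : S.StratO) (t : ℕ) (m : S.MemO t) : ℝ :=
  sSup ((fun ω => S.cAO g ω t + S.γ ^ t * S.cCinfO g ω t) '' {ω | S.memOfO g ω t = m})

/-- Optimal value function for the observable-cost problem. -/
def VoptO (t : ℕ) (m : S.MemO t) : ℝ :=
  sInf ((fun g => S.VO g t m) '' {g : S.StratO | ∃ ω, S.memOfO g ω t = m})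

/-- Optimal finite-horizon function for the observable-cost problem, fuel-indexed. -/
def JoptO : ℕ → (t : ℕ) → S.MemO t → ℝ
  | 0, t, m => sInf (Set.range fun u : S.U =>
      sSup ((fun ω => S.oA ω t m.2.2 + S.γ ^ t * S.oc ω t (Fin.snoc m.2.2 u)) ''
        S.consistentO t m))
  | (n+1), t, m => sInf (Set.range fun u : S.U =>
      sSup ((fun ω => JoptO n (t+1) (S.omemO ω (t+1) (Fin.snoc m.2.2 u))) '' S.consistentO t m))

/-- `[[C_t, S̄_{t+1} | m_t, u_t]]`: conditional range of the current cost and next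
(information-) state `S̄_{t+1} = σ̄_{t+1}(M_{t+1})` given the memory `m_t` and action `u_t`. -/
def CSrange {Sb : Type*} (σ : (t : ℕ) → S.MemO t → Sb) (t : ℕ) (m : S.MemO t) (u : S.U) :
    Set (ℝ × Sb) :=
  (fun ω => (S.oc ω t (Fin.snoc m.2.2 u), σ (t+1) (S.omemO ω (t+1) (Fin.snoc m.2.2 u)))) ''
    S.consistentO t m

/-- `[[C_t, Y_{t+1} | m_t, u_t]]`. -/
def CYrange (t : ℕ) (m : S.MemO t) (u : S.U) : Set (ℝ × S.Y) :=
  (fun ω => (S.oc ω t (Fin.snoc m.2.2 u), S.oy ω (t+1) (Fin.snoc m.2.2 u))) '' S.consistentO t m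

open Classical in
/-- Conditional indicator `𝕀((c_t, m_{t+1}) | m_t, u_t)` for the observable-cost problem. -/
def indObs (t : ℕ) (c : ℝ) (m' : S.MemO (t+1)) (m : S.MemO t) (u : S.U) : EReal :=
  if ∃ ω ∈ S.consistentO t m,
      S.oc ω t (Fin.snoc m.2.2 u) = c ∧ S.omemO ω (t+1) (Fin.snoc m.2.2 u) = m' then 0 else ⊥

/-- Conditional accrued distribution `r_t((c_t, m_{t+1}) | m_t, u_t)` for the
observable-cost problem. -/
def rObs (t : ℕ) (c : ℝ) (m' : S.MemO (t+1)) (m : S.MemO t) (u : S.U) : EReal :=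
  sSup ((fun a : ℝ => (a : EReal)) '' {a | a ∈ Set.Icc 0 S.amax ∧ ∃ ω ∈ S.consistentO t m,
      S.oc ω t (Fin.snoc m.2.2 u) = c ∧ S.omemO ω (t+1) (Fin.snoc m.2.2 u) = m' ∧
      S.oA ω t m.2.2 = a}) -
  sSup ((fun a : ℝ => (a : EReal)) '' {a | a ∈ Set.Icc 0 S.amax ∧ ∃ ω ∈ S.consistentO t m,
      S.oA ω t m.2.2 = a})

end Sys

open Set

namespace Sys

variable (S : Sys)

lemma gpos : (0:ℝ) < S.γ := S.hγ0
lemma one_sub_pos : (0:ℝ) < 1 - S.γ := by linarith [S.hγ1]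
lemma cmin_le_cmax : S.cmin ≤ S.cmax := by
  obtain ⟨w⟩ := S.hW; obtain ⟨u⟩ := S.hU
  have h := S.hcost 0 (fun _ => w) (fun _ => u)
  exact le_trans h.1 h.2
lemma cmax_nonneg : 0 ≤ S.cmax := le_trans S.hcmin S.cmin_le_cmax
lemma amax_nonneg : 0 ≤ S.amax := div_nonneg S.cmax_nonneg S.one_sub_pos.le
lemma cdiv_nonneg : 0 ≤ S.cmin / (1 - S.γ) := div_nonneg S.hcmin S.one_sub_pos.le
lemma cdiv_le_amax : S.cmin / (1 - S.γ) ≤ S.amax :=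
  (div_le_div_iff_of_pos_right S.one_sub_pos).mpr S.cmin_le_cmax

lemma oc_mem (ω : ℕ → S.W) (t : ℕ) (υ : Fin (t+1) → S.U) :
    S.oc ω t υ ∈ Set.Icc S.cmin S.cmax := S.hcost t _ υ

lemma oc_nonneg (ω : ℕ → S.W) (t : ℕ) (υ : Fin (t+1) → S.U) : 0 ≤ S.oc ω t υ :=
  le_trans S.hcmin (S.oc_mem ω t υ).1

lemma oA_nonneg (ω : ℕ → S.W) (t : ℕ) (υ : Fin t → S.U) : 0 ≤ S.oA ω t υ := by
  refine Finset.sum_nonneg fun ℓ _ => mul_nonneg (pow_nonneg S.gpos.le _) (S.oc_nonneg _ _ _)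

lemma geom_bound (t : ℕ) : ∑ i ∈ Finset.range t, S.γ ^ i ≤ 1 / (1 - S.γ) := by
  have h := Summable.sum_le_tsum (Finset.range t) (fun i _ => pow_nonneg S.gpos.le i)
    (summable_geometric_of_lt_one S.gpos.le S.hγ1)
  rw [tsum_geometric_of_lt_one S.gpos.le S.hγ1] at h
  rw [one_div]
  exact h

lemma oA_le_amax (ω : ℕ → S.W) (t : ℕ) (υ : Fin t → S.U) : S.oA ω t υ ≤ S.amax := by
  have h1 : S.oA ω t υ ≤ ∑ ℓ : Fin t, S.γ ^ (ℓ:ℕ) * S.cmax := by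
    refine Finset.sum_le_sum fun ℓ _ => ?_
    exact mul_le_mul_of_nonneg_left (S.oc_mem _ _ _).2 (pow_nonneg S.gpos.le _)
  have h2 : ∑ ℓ : Fin t, S.γ ^ (ℓ:ℕ) * S.cmax = (∑ i ∈ Finset.range t, S.γ ^ i) * S.cmax := by
    rw [← Finset.sum_mul, Fin.sum_univ_eq_sum_range]
  have h3 : (∑ i ∈ Finset.range t, S.γ ^ i) * S.cmax ≤ (1 / (1 - S.γ)) * S.cmax :=
    mul_le_mul_of_nonneg_right (S.geom_bound t) S.cmax_nonneg
  have : (1 / (1 - S.γ)) * S.cmax = S.amax := by rw [Sys.amax]; ring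
  linarith

lemma Arange_subset (t : ℕ) (m : S.Mem t) : S.Arange t m ⊆ Set.Icc 0 S.amax := by
  rintro _ ⟨ω, hω, rfl⟩; exact ⟨S.oA_nonneg _ _ _, S.oA_le_amax _ _ _⟩

lemma Arange_bddAbove (t : ℕ) (m : S.Mem t) : BddAbove (S.Arange t m) :=
  ⟨S.amax, fun a ha => (S.Arange_subset t m ha).2⟩

lemma sSup_Arange_le (t : ℕ) (m : S.Mem t) (hm : (S.consistent t m).Nonempty) :
    sSup (S.Arange t m) ≤ S.amax :=
  csSup_le (hm.image _) fun a ha => (S.Arange_subset t m ha).2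

lemma sSup_Arange_nonneg (t : ℕ) (m : S.Mem t) (hm : (S.consistent t m).Nonempty) :
    0 ≤ sSup (S.Arange t m) := by
  obtain ⟨ω, hω⟩ := hm
  exact le_trans (S.oA_nonneg ω t m.2) (le_csSup (S.Arange_bddAbove t m) ⟨ω, hω, rfl⟩)

lemma ccost_mem (g : S.Strat) (ω : ℕ → S.W) (t : ℕ) :
    S.ccost g ω t ∈ Set.Icc S.cmin S.cmax := S.hcost t _ _

lemma ccost_nonneg (g : S.Strat) (ω : ℕ → S.W) (t : ℕ) : 0 ≤ S.ccost g ω t :=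
  le_trans S.hcmin (S.ccost_mem g ω t).1

lemma summable_ccost (g : S.Strat) (ω : ℕ → S.W) (t : ℕ) :
    Summable (fun k => S.γ ^ k * S.ccost g ω (t + k)) := by
  refine Summable.of_nonneg_of_le
    (fun k => mul_nonneg (pow_nonneg S.gpos.le _) (S.ccost_nonneg g ω _))
    (fun k => mul_le_mul_of_nonneg_left (S.ccost_mem g ω _).2 (pow_nonneg S.gpos.le _))
    ?_
  exact (summable_geometric_of_lt_one S.gpos.le S.hγ1).mul_right _

lemma tsum_geom_mul (c : ℝ) : ∑' k : ℕ, S.γ ^ k * c = c / (1 - S.γ) := by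
  rw [tsum_mul_right, tsum_geometric_of_lt_one S.gpos.le S.hγ1]
  rw [div_eq_mul_inv, mul_comm]

lemma cCinf_le (g : S.Strat) (ω : ℕ → S.W) (t : ℕ) : S.cCinf g ω t ≤ S.amax := by
  have h := Summable.tsum_le_tsum (f := fun k => S.γ ^ k * S.ccost g ω (t + k))
    (g := fun k => S.γ ^ k * S.cmax)
    (fun k => mul_le_mul_of_nonneg_left (S.ccost_mem g ω _).2 (pow_nonneg S.gpos.le _))
    (S.summable_ccost g ω t) ((summable_geometric_of_lt_one S.gpos.le S.hγ1).mul_right _)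
  rw [S.tsum_geom_mul S.cmax] at h
  exact h

lemma cCinf_ge (g : S.Strat) (ω : ℕ → S.W) (t : ℕ) : S.cmin / (1 - S.γ) ≤ S.cCinf g ω t := by
  have h := Summable.tsum_le_tsum (f := fun k => S.γ ^ k * S.cmin)
    (g := fun k => S.γ ^ k * S.ccost g ω (t + k))
    (fun k => mul_le_mul_of_nonneg_left (S.ccost_mem g ω _).1 (pow_nonneg S.gpos.le _))
    ((summable_geometric_of_lt_one S.gpos.le S.hγ1).mul_right _) (S.summable_ccost g ω t)
  rw [S.tsum_geom_mul S.cmin] at h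
  exact h

lemma cCinf_nonneg (g : S.Strat) (ω : ℕ → S.W) (t : ℕ) : 0 ≤ S.cCinf g ω t :=
  le_trans S.cdiv_nonneg (S.cCinf_ge g ω t)

lemma cA_nonneg (g : S.Strat) (ω : ℕ → S.W) (t : ℕ) : 0 ≤ S.cA g ω t :=
  Finset.sum_nonneg fun ℓ _ => mul_nonneg (pow_nonneg S.gpos.le _) (S.ccost_nonneg g ω ℓ)

lemma cA_le_amax (g : S.Strat) (ω : ℕ → S.W) (t : ℕ) : S.cA g ω t ≤ S.amax := by
  have h1 : S.cA g ω t ≤ ∑ ℓ ∈ Finset.range t, S.γ ^ ℓ * S.cmax := by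
    refine Finset.sum_le_sum fun ℓ _ => ?_
    exact mul_le_mul_of_nonneg_left (S.ccost_mem g ω ℓ).2 (pow_nonneg S.gpos.le _)
  have h2 : ∑ ℓ ∈ Finset.range t, S.γ ^ ℓ * S.cmax = (∑ i ∈ Finset.range t, S.γ ^ i) * S.cmax :=
    by rw [← Finset.sum_mul]
  have h3 : (∑ i ∈ Finset.range t, S.γ ^ i) * S.cmax ≤ (1 / (1 - S.γ)) * S.cmax :=
    mul_le_mul_of_nonneg_right (S.geom_bound t) S.cmax_nonneg
  have : (1 / (1 - S.γ)) * S.cmax = S.amax := by rw [Sys.amax]; ring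
  linarith

lemma cCinf_succ (g : S.Strat) (ω : ℕ → S.W) (t : ℕ) :
    S.cCinf g ω t = S.ccost g ω t + S.γ * S.cCinf g ω (t+1) := by
  have hs := S.summable_ccost g ω t
  rw [Sys.cCinf, Summable.tsum_eq_zero_add hs]
  simp only [pow_zero, one_mul, Nat.add_zero]
  congr 1
  have : ∀ k : ℕ, S.γ ^ (k+1) * S.ccost g ω (t + (k+1)) =
      S.γ * (S.γ ^ k * S.ccost g ω (t + 1 + k)) := by
    intro k
    have h : t + (k+1) = t + 1 + k := by omega
    rw [h, pow_succ]
    ring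
  rw [tsum_congr this, tsum_mul_left]
  rfl

lemma val_succ (g : S.Strat) (ω : ℕ → S.W) (t : ℕ) :
    S.cA g ω (t+1) + S.γ ^ (t+1) * S.cCinf g ω (t+1)
      = S.cA g ω t + S.γ ^ t * S.cCinf g ω t := by
  have h1 : S.cA g ω (t+1) = S.cA g ω t + S.γ ^ t * S.ccost g ω t := Finset.sum_range_succ _ _
  rw [h1, S.cCinf_succ g ω t, pow_succ]
  ring

end Sys


open Set

namespace Sys

variable (S : Sys)

/-- Prefix of a memory realization. -/
def pre (s t : ℕ) (h : s ≤ t) (M : S.Mem t) : S.Mem s :=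
  (fun i => M.1 ⟨i, by have := i.isLt; omega⟩, fun i => M.2 ⟨i, by have := i.isLt; omega⟩)

lemma pre_self (t : ℕ) (M : S.Mem t) : S.pre t t le_rfl M = M := rfl

lemma pre_omem (s t : ℕ) (h : s ≤ t) (ω : ℕ → S.W) (υ : Fin t → S.U) :
    S.pre s t h (S.omem ω t υ)
      = S.omem ω s (fun i => υ ⟨i, by have := i.isLt; omega⟩) := rfl

lemma snoc_at {β : Type*} {t : ℕ} (f : Fin t → β) (x : β) (j : ℕ) (hj : j < t)
    (hj' : j < t + 1) : (Fin.snoc f x : Fin (t+1) → β) ⟨j, hj'⟩ = f ⟨j, hj⟩ := by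
  have h : (⟨j, hj'⟩ : Fin (t+1)) = Fin.castSucc ⟨j, hj⟩ := rfl
  rw [h, Fin.snoc_castSucc]

lemma snoc_at_last {β : Type*} {t : ℕ} (f : Fin t → β) (x : β) (hj' : t < t + 1) :
    (Fin.snoc f x : Fin (t+1) → β) ⟨t, hj'⟩ = x := by
  have h : (⟨t, hj'⟩ : Fin (t+1)) = Fin.last t := rfl
  rw [h, Fin.snoc_last]

lemma snoc_restrict {β : Type*} {t : ℕ} (f : Fin t → β) (x : β) :
    (fun i : Fin t => (Fin.snoc f x : Fin (t+1) → β) ⟨i.1, by have := i.isLt; omega⟩) = f := by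
  funext i
  rw [snoc_at f x i.1 i.isLt]

lemma memOf_eq_omem (g : S.Strat) (ω : ℕ → S.W) (t : ℕ) :
    S.memOf g ω t = S.omem ω t (fun ℓ : Fin t => S.act g ω ℓ) := by
  induction t with
  | zero =>
    refine Prod.ext ?_ ?_
    · funext i
      obtain ⟨i, hi⟩ := i
      have : i = 0 := by omega
      subst this
      rfl
    · funext i; exact i.elim0
  | succ t IH =>
    have hus : (Fin.snoc (S.memOf g ω t).2 (g t (S.memOf g ω t)) : Fin (t+1) → S.U)
        = fun ℓ : Fin (t+1) => S.act g ω ℓ := by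
      funext i
      refine Fin.lastCases ?_ (fun j => ?_) i
      · rw [Fin.snoc_last]
        rfl
      · rw [Fin.snoc_castSucc, IH]
        rfl
    have e1 : S.memOf g ω (t+1) = (Fin.snoc (S.memOf g ω t).1
        (S.h t (fun i : Fin (t+1) => ω i)
          (Fin.snoc (S.memOf g ω t).2 (g t (S.memOf g ω t)))),
        Fin.snoc (S.memOf g ω t).2 (g t (S.memOf g ω t))) := rfl
    have hfst : Fin.snoc (S.memOf g ω t).1
        (S.h t (fun i : Fin (t+1) => ω i) (fun ℓ : Fin (t+1) => S.act g ω ℓ))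
        = (S.omem ω (t+1) (fun ℓ : Fin (t+1) => S.act g ω ℓ)).1 := by
      funext i
      refine Fin.lastCases ?_ (fun j => ?_) i
      · rw [Fin.snoc_last]
        exact rfl
      · rw [Fin.snoc_castSucc, IH]
        exact rfl
    rw [e1, hus]
    exact Prod.ext hfst rfl

lemma pre_memOf (g : S.Strat) (ω : ℕ → S.W) (s t : ℕ) (h : s ≤ t) :
    S.pre s t h (S.memOf g ω t) = S.memOf g ω s := by
  rw [memOf_eq_omem, memOf_eq_omem, pre_omem]

lemma memOf_pre_of_consistent (g : S.Strat) (t : ℕ) (m : S.Mem t)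
    (hg : ∀ s (hs : s < t), g s (S.pre s t hs.le m) = m.2 ⟨s, hs⟩)
    (ω : ℕ → S.W) (hω : ω ∈ S.consistent t m) :
    ∀ s (hs : s ≤ t),
      S.memOf g ω s = S.omem ω s (fun i : Fin s => m.2 ⟨i, by have := i.isLt; omega⟩) := by
  intro s
  induction s with
  | zero =>
    intro _
    refine Prod.ext ?_ ?_
    · funext i
      obtain ⟨i, hi⟩ := i
      have : i = 0 := by omega
      subst this
      rfl
    · funext i; exact i.elim0
  | succ s IH =>
    intro hs
    have hst : s < t := by omega
    have IHs := IH (by omega)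
    have hpre : S.pre s t hst.le m
        = S.omem ω s (fun i : Fin s => m.2 ⟨i, by have := i.isLt; omega⟩) := by
      conv_lhs => rw [← hω]
      rfl
    have hkey : g s (S.memOf g ω s) = m.2 ⟨s, hst⟩ := by
      rw [IHs, ← hpre]
      exact hg s hst
    have hus : (Fin.snoc (S.memOf g ω s).2 (g s (S.memOf g ω s)) : Fin (s+1) → S.U)
        = fun i : Fin (s+1) => m.2 ⟨i, by have := i.isLt; omega⟩ := by
      funext i
      refine Fin.lastCases ?_ (fun j => ?_) i
      · rw [Fin.snoc_last, hkey]
        exact rfl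
      · rw [Fin.snoc_castSucc, IHs]
        rfl
    have e1 : S.memOf g ω (s+1) = (Fin.snoc (S.memOf g ω s).1
        (S.h s (fun i : Fin (s+1) => ω i)
          (Fin.snoc (S.memOf g ω s).2 (g s (S.memOf g ω s)))),
        Fin.snoc (S.memOf g ω s).2 (g s (S.memOf g ω s))) := rfl
    have hfst : Fin.snoc (S.memOf g ω s).1
        (S.h s (fun i : Fin (s+1) => ω i) (fun i : Fin (s+1) => m.2 ⟨i, by have := i.isLt; omega⟩))
        = (S.omem ω (s+1) (fun i : Fin (s+1) => m.2 ⟨i, by have := i.isLt; omega⟩)).1 := by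
      funext i
      refine Fin.lastCases ?_ (fun j => ?_) i
      · rw [Fin.snoc_last]
        exact rfl
      · rw [Fin.snoc_castSucc, IHs]
        exact rfl
    rw [e1, hus]
    exact Prod.ext hfst rfl

lemma memOf_eq_of_consistent' {g : S.Strat} {t : ℕ} {m : S.Mem t}
    (hg : ∀ s (hs : s < t), g s (S.pre s t hs.le m) = m.2 ⟨s, hs⟩)
    {ω : ℕ → S.W} (hω : ω ∈ S.consistent t m) : S.memOf g ω t = m := by
  have h := S.memOf_pre_of_consistent g t m hg ω hω t le_rfl
  rw [h]
  exact hω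

lemma hg_of_witness {g : S.Strat} {t : ℕ} {m : S.Mem t} {ω0 : ℕ → S.W}
    (h0 : S.memOf g ω0 t = m) :
    ∀ s (hs : s < t), g s (S.pre s t hs.le m) = m.2 ⟨s, hs⟩ := by
  intro s hs
  have hp : S.pre s t hs.le m = S.memOf g ω0 s := by rw [← h0, pre_memOf]
  have h2 : m.2 = fun ℓ : Fin t => S.act g ω0 ℓ := by
    rw [← h0, memOf_eq_omem]
    exact rfl
  rw [hp, h2]
  rfl

lemma mem_consistent_of_memOf {g : S.Strat} {ω : ℕ → S.W} {t : ℕ} {m : S.Mem t}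
    (h : S.memOf g ω t = m) : ω ∈ S.consistent t m := by
  have h2 : m.2 = fun ℓ : Fin t => S.act g ω ℓ := by rw [← h, memOf_eq_omem]; exact rfl
  show S.omem ω t m.2 = m
  rw [h2, ← memOf_eq_omem]
  exact h

lemma memOf_eq_of_consistent {g : S.Strat} {t : ℕ} {m : S.Mem t} {ω0 : ℕ → S.W}
    (h0 : S.memOf g ω0 t = m) {ω : ℕ → S.W} (hω : ω ∈ S.consistent t m) :
    S.memOf g ω t = m :=
  S.memOf_eq_of_consistent' (S.hg_of_witness h0) hω

lemma closedset_eq {g : S.Strat} {t : ℕ} {m : S.Mem t} (h0 : ∃ ω0, S.memOf g ω0 t = m) :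
    {ω | S.memOf g ω t = m} = S.consistent t m := by
  obtain ⟨ω0, h0⟩ := h0
  ext ω
  exact ⟨fun h => S.mem_consistent_of_memOf h, fun h => S.memOf_eq_of_consistent h0 h⟩

lemma cA_eq_oA {g : S.Strat} {ω : ℕ → S.W} {t : ℕ} {m : S.Mem t}
    (h : S.memOf g ω t = m) : S.cA g ω t = S.oA ω t m.2 := by
  have h2 : m.2 = fun ℓ : Fin t => S.act g ω ℓ := by rw [← h, memOf_eq_omem]; exact rfl
  rw [h2, Sys.cA, Sys.oA, ← Fin.sum_univ_eq_sum_range]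
  rfl

lemma memOf_succ {g : S.Strat} {t : ℕ} {m : S.Mem t} {ω0 : ℕ → S.W}
    (h0 : S.memOf g ω0 t = m) {ω : ℕ → S.W} (hω : ω ∈ S.consistent t m) :
    S.memOf g ω (t+1) = S.omem ω (t+1) (Fin.snoc m.2 (g t m)) := by
  have hmem : S.memOf g ω t = m := S.memOf_eq_of_consistent h0 hω
  rw [memOf_eq_omem]
  congr 1
  funext i
  refine Fin.lastCases ?_ (fun j => ?_) i
  · rw [Fin.snoc_last]
    show g t (S.memOf g ω t) = g t m
    rw [hmem]
  · rw [Fin.snoc_castSucc]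
    have h2 : m.2 = fun ℓ : Fin t => S.act g ω ℓ := by
      rw [← hmem, memOf_eq_omem]; exact rfl
    rw [h2]
    exact rfl

lemma omem_self_consistent (ω : ℕ → S.W) (t : ℕ) (υ : Fin t → S.U) :
    ω ∈ S.consistent t (S.omem ω t υ) := rfl

lemma oA_snoc (ω : ℕ → S.W) (t : ℕ) (υ : Fin t → S.U) (u : S.U) :
    S.oA ω (t+1) (Fin.snoc υ u) = S.oA ω t υ + S.γ ^ t * S.oc ω t (Fin.snoc υ u) := by
  rw [Sys.oA, Fin.sum_univ_castSucc]
  have h1 : ∀ ℓ : Fin t, (fun j : Fin ((ℓ:ℕ)+1) =>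
      (Fin.snoc υ u : Fin (t+1) → S.U) ⟨j.1, by have := j.isLt; have := ℓ.isLt; omega⟩)
      = (fun j : Fin ((ℓ:ℕ)+1) => υ ⟨j.1, by have := j.isLt; have := ℓ.isLt; omega⟩) := by
    intro ℓ
    funext j
    exact snoc_at υ u j.1 (by have := j.isLt; have := ℓ.isLt; omega)
      (by have := j.isLt; have := ℓ.isLt; omega)
  have h2 : ∑ ℓ : Fin t, S.γ ^ ((Fin.castSucc ℓ : Fin (t+1)):ℕ) *
      S.oc ω ((Fin.castSucc ℓ : Fin (t+1)):ℕ)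
        (fun j : Fin (((Fin.castSucc ℓ : Fin (t+1)):ℕ)+1) => (Fin.snoc υ u : Fin (t+1) → S.U)
          ⟨j.1, by have := j.isLt; have hh := (Fin.castSucc ℓ).isLt; omega⟩)
      = S.oA ω t υ := by
    rw [Sys.oA]
    refine Finset.sum_congr rfl fun ℓ _ => ?_
    exact congrArg (fun q => S.γ ^ (ℓ:ℕ) * S.oc ω ℓ q) (h1 ℓ)
  exact congrArg₂ (· + ·) h2 rfl

lemma exists_admissible (t : ℕ) (m : S.Mem t) (hm : (S.consistent t m).Nonempty) :
    ∃ g : S.Strat, ∃ ω0, S.memOf g ω0 t = m := by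
  obtain ⟨ω0, hω0⟩ := hm
  classical
  refine ⟨fun s M => if h : s < t then m.2 ⟨s, h⟩ else Classical.arbitrary S.U, ω0, ?_⟩
  refine S.memOf_eq_of_consistent' ?_ hω0
  intro s hs
  rw [dif_pos hs]

lemma memOf_eq_of_agree {g1 g2 : S.Strat} {t1 : ℕ} {M0 : S.Mem t1} {ω : ℕ → S.W}
    (h1 : S.memOf g1 ω t1 = M0) (h2 : S.memOf g2 ω t1 = M0)
    (hag : ∀ s (M : S.Mem s) (h : t1 ≤ s), S.pre t1 s h M = M0 → g1 s M = g2 s M) :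
    ∀ k, S.memOf g1 ω (t1 + k) = S.memOf g2 ω (t1 + k) := by
  intro k
  induction k with
  | zero => exact h1.trans h2.symm
  | succ k IH =>
    have hg : g1 (t1+k) (S.memOf g1 ω (t1+k)) = g2 (t1+k) (S.memOf g1 ω (t1+k)) := by
      refine hag (t1+k) _ (Nat.le_add_right _ _) ?_
      rw [pre_memOf, h1]
    have e1 : S.memOf g1 ω (t1+k+1) = (Fin.snoc (S.memOf g1 ω (t1+k)).1
        (S.h (t1+k) (fun i => ω i)
          (Fin.snoc (S.memOf g1 ω (t1+k)).2 (g1 (t1+k) (S.memOf g1 ω (t1+k))))),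
        Fin.snoc (S.memOf g1 ω (t1+k)).2 (g1 (t1+k) (S.memOf g1 ω (t1+k)))) := rfl
    have e2 : S.memOf g2 ω (t1+k+1) = (Fin.snoc (S.memOf g2 ω (t1+k)).1
        (S.h (t1+k) (fun i => ω i)
          (Fin.snoc (S.memOf g2 ω (t1+k)).2 (g2 (t1+k) (S.memOf g2 ω (t1+k))))),
        Fin.snoc (S.memOf g2 ω (t1+k)).2 (g2 (t1+k) (S.memOf g2 ω (t1+k)))) := rfl
    show S.memOf g1 ω (t1+k+1) = S.memOf g2 ω (t1+k+1)
    rw [e1, e2, ← IH, hg]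

lemma act_eq_of_agree {g1 g2 : S.Strat} {t1 : ℕ} {M0 : S.Mem t1} {ω : ℕ → S.W}
    (h1 : S.memOf g1 ω t1 = M0) (h2 : S.memOf g2 ω t1 = M0)
    (hag : ∀ s (M : S.Mem s) (h : t1 ≤ s), S.pre t1 s h M = M0 → g1 s M = g2 s M) :
    ∀ s, S.act g1 ω s = S.act g2 ω s := by
  intro s
  rcases lt_or_ge s t1 with hs | hs
  · have a1 : S.act g1 ω s = M0.2 ⟨s, hs⟩ := by
      rw [← h1, memOf_eq_omem]
      exact rfl
    have a2 : S.act g2 ω s = M0.2 ⟨s, hs⟩ := by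
      rw [← h2, memOf_eq_omem]
      exact rfl
    rw [a1, a2]
  · obtain ⟨k, rfl⟩ : ∃ k, s = t1 + k := ⟨s - t1, by omega⟩
    have hm := S.memOf_eq_of_agree h1 h2 hag k
    show g1 (t1+k) (S.memOf g1 ω (t1+k)) = g2 (t1+k) (S.memOf g2 ω (t1+k))
    rw [hm]
    refine hag (t1+k) _ (Nat.le_add_right _ _) ?_
    rw [pre_memOf, h2]

lemma ccost_eq_of_agree {g1 g2 : S.Strat} {t1 : ℕ} {M0 : S.Mem t1} {ω : ℕ → S.W}
    (h1 : S.memOf g1 ω t1 = M0) (h2 : S.memOf g2 ω t1 = M0)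
    (hag : ∀ s (M : S.Mem s) (h : t1 ≤ s), S.pre t1 s h M = M0 → g1 s M = g2 s M) :
    ∀ s, S.ccost g1 ω s = S.ccost g2 ω s := by
  intro s
  rw [Sys.ccost, Sys.ccost]
  congr 1
  funext i
  exact S.act_eq_of_agree h1 h2 hag i

lemma V_congr {g1 g2 : S.Strat} {t1 : ℕ} {M0 : S.Mem t1}
    (hw1 : ∃ ω, S.memOf g1 ω t1 = M0) (hw2 : ∃ ω, S.memOf g2 ω t1 = M0)
    (hag : ∀ s (M : S.Mem s) (h : t1 ≤ s), S.pre t1 s h M = M0 → g1 s M = g2 s M) :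
    S.V g1 t1 M0 = S.V g2 t1 M0 := by
  rw [Sys.V, Sys.V, S.closedset_eq hw1, S.closedset_eq hw2]
  refine congrArg sSup (Set.image_congr fun ω hω => ?_)
  have h1 := S.memOf_eq_of_consistent hw1.choose_spec hω
  have h2 := S.memOf_eq_of_consistent hw2.choose_spec hω
  have hcc := S.ccost_eq_of_agree h1 h2 hag
  have hA : S.cA g1 ω t1 = S.cA g2 ω t1 := by
    rw [S.cA_eq_oA h1, S.cA_eq_oA h2]
  have hC : S.cCinf g1 ω t1 = S.cCinf g2 ω t1 := by
    rw [Sys.cCinf, Sys.cCinf]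
    exact tsum_congr fun k => by rw [hcc]
  rw [hA, hC]

end Sys


open Set

lemma bddAbove_image_add_const {X : Type*} (f : X → ℝ) (d : ℝ) (K : Set X)
    (hb : BddAbove (f '' K)) : BddAbove ((fun x => f x + d) '' K) := by
  obtain ⟨b, hbb⟩ := hb
  refine ⟨b + d, ?_⟩
  rintro _ ⟨x, hx, rfl⟩
  exact add_le_add (hbb ⟨x, hx, rfl⟩) le_rfl

lemma csSup_add_const (A : Set ℝ) (hA : A.Nonempty) (hb : BddAbove A) (d : ℝ) :
    sSup ((fun x => x + d) '' A) = sSup A + d := by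
  apply le_antisymm
  · refine csSup_le (hA.image _) ?_
    rintro _ ⟨x, hx, rfl⟩
    exact add_le_add (le_csSup hb hx) le_rfl
  · have hbi : BddAbove ((fun x => x + d) '' A) := by
      obtain ⟨b, hbb⟩ := hb
      exact ⟨b + d, by rintro _ ⟨x, hx, rfl⟩; exact add_le_add (hbb hx) le_rfl⟩
    have : sSup A ≤ sSup ((fun x => x + d) '' A) - d := by
      refine csSup_le hA fun x hx => ?_
      have := le_csSup hbi (⟨x, hx, rfl⟩ : x + d ∈ (fun x => x + d) '' A)
      linarith
    linarith

lemma csSup_image_add_const {X : Type*} (f : X → ℝ) (d : ℝ) (K : Set X) (hK : K.Nonempty)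
    (hb : BddAbove (f '' K)) :
    sSup ((fun x => f x + d) '' K) = sSup (f '' K) + d := by
  have h1 : (fun x => f x + d) '' K = (fun y => y + d) '' (f '' K) := by
    rw [Set.image_image]
  rw [h1, csSup_add_const _ (hK.image f) hb]

lemma csSup_smul_add (k d : ℝ) (hk : 0 < k) (A : Set ℝ) (hA : A.Nonempty) (hb : BddAbove A) :
    sSup ((fun x => k * x + d) '' A) = k * sSup A + d := by
  have hbi : BddAbove ((fun x => k * x + d) '' A) := by
    obtain ⟨b, hbb⟩ := hb
    refine ⟨k * b + d, ?_⟩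
    rintro _ ⟨x, hx, rfl⟩
    have := hbb hx
    dsimp only
    nlinarith
  apply le_antisymm
  · refine csSup_le (hA.image _) ?_
    rintro _ ⟨x, hx, rfl⟩
    have := le_csSup hb hx
    dsimp only
    nlinarith
  · have h3 : sSup A ≤ (sSup ((fun x => k * x + d) '' A) - d) / k := by
      refine csSup_le hA fun x hx => ?_
      have := le_csSup hbi (⟨x, hx, rfl⟩ : k * x + d ∈ (fun x => k * x + d) '' A)
      rw [le_div_iff₀ hk]
      linarith
    have h4 : k * sSup A + d ≤ k * ((sSup ((fun x => k * x + d) '' A) - d) / k) + d :=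
      add_le_add (mul_le_mul_of_nonneg_left h3 hk.le) le_rfl
    have h5 : k * ((sSup ((fun x => k * x + d) '' A) - d) / k) + d
        = sSup ((fun x => k * x + d) '' A) := by
      field_simp
      ring
    linarith

/-- Grouped supremum identity. -/
lemma group_sSup {X I : Type*} (K : Set X) (hK : K.Nonempty) (f e : X → ℝ) (π : X → I)
    (hb : BddAbove (f '' K))
    (he : ∀ x ∈ K, e x = sSup (f '' {y ∈ K | π y = π x})) :
    sSup (e '' K) = sSup (f '' K) := by
  have hsub : ∀ x ∈ K, f '' {y ∈ K | π y = π x} ⊆ f '' K :=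
    fun x _ => Set.image_mono (Set.sep_subset _ _)
  have hle : ∀ x ∈ K, e x ≤ sSup (f '' K) := by
    intro x hx
    rw [he x hx]
    exact csSup_le_csSup hb ⟨f x, ⟨x, ⟨hx, rfl⟩, rfl⟩⟩ (hsub x hx)
  have hbe : BddAbove (e '' K) := by
    refine ⟨sSup (f '' K), ?_⟩
    rintro _ ⟨x, hx, rfl⟩
    exact hle x hx
  apply le_antisymm
  · refine csSup_le (hK.image e) ?_
    rintro _ ⟨x, hx, rfl⟩
    exact hle x hx
  · refine csSup_le (hK.image f) ?_
    rintro _ ⟨x, hx, rfl⟩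
    have h1 : f x ≤ e x := by
      rw [he x hx]
      exact le_csSup (BddAbove.mono (hsub x hx) hb) ⟨x, ⟨hx, rfl⟩, rfl⟩
    exact le_trans h1 (le_csSup hbe ⟨x, hx, rfl⟩)

lemma EReal_sSup_coe_image (A : Set ℝ) (hA : A.Nonempty) (hb : BddAbove A) :
    sSup ((fun a : ℝ => (a : EReal)) '' A) = ((sSup A : ℝ) : EReal) := by
  apply le_antisymm
  · refine sSup_le ?_
    rintro _ ⟨a, ha, rfl⟩
    dsimp only
    exact_mod_cast le_csSup hb ha
  · obtain ⟨a0, ha0⟩ := hA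
    set B := sSup ((fun a : ℝ => (a : EReal)) '' A) with hB
    have h1 : (a0 : EReal) ≤ B := le_sSup ⟨a0, ha0, rfl⟩
    have hbot : B ≠ ⊥ := by
      intro h
      rw [h] at h1
      exact EReal.coe_ne_bot a0 (le_bot_iff.mp h1)
    have htop : B ≠ ⊤ := by
      refine ne_top_of_le_ne_top (EReal.coe_ne_top (sSup A)) ?_
      refine sSup_le ?_
      rintro _ ⟨a, ha, rfl⟩
      dsimp only
      exact_mod_cast le_csSup hb ha
    have hcoe : ((B.toReal : ℝ) : EReal) = B := EReal.coe_toReal htop hbot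
    rw [← hcoe]
    rw [EReal.coe_le_coe_iff]
    refine csSup_le ⟨a0, ha0⟩ fun a ha => ?_
    have : (a : EReal) ≤ B := le_sSup ⟨a, ha, rfl⟩
    rw [← hcoe] at this
    exact_mod_cast this

lemma EReal_bot_sub (x : EReal) : (⊥ : EReal) - x = ⊥ := by
  rw [sub_eq_add_neg, EReal.bot_add]


open Set

namespace Sys

variable (S : Sys)

/-- Next open-loop memory. -/
def nxt (t : ℕ) (m : S.Mem t) (u : S.U) (ω : ℕ → S.W) : S.Mem (t+1) :=
  S.omem ω (t+1) (Fin.snoc m.2 u)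

/-- The group of disturbances giving cost `c` and next information state `s'`. -/
def Gset {Ss : Type} (σ : (t : ℕ) → S.Mem t → Ss) (t : ℕ) (m : S.Mem t) (u : S.U)
    (c : ℝ) (s' : Ss) : Set (ℕ → S.W) :=
  {y ∈ S.consistent t m | S.oc y t (Fin.snoc m.2 u) = c ∧ σ (t+1) (S.nxt t m u y) = s'}

lemma mem_consistent_nxt (t : ℕ) (m : S.Mem t) (u : S.U) (ω : ℕ → S.W) :
    ω ∈ S.consistent (t+1) (S.nxt t m u ω) := rfl

lemma consistent_nxt_mem {t : ℕ} {m : S.Mem t} {u : S.U} {ω y : ℕ → S.W}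
    (hω : ω ∈ S.consistent t m) (hy : y ∈ S.consistent (t+1) (S.nxt t m u ω)) :
    y ∈ S.consistent t m ∧ S.nxt t m u y = S.nxt t m u ω := by
  have hy' : S.omem y (t+1) (Fin.snoc m.2 u) = S.omem ω (t+1) (Fin.snoc m.2 u) := hy
  have hpre : ∀ z : ℕ → S.W, S.pre t (t+1) (Nat.le_succ t) (S.omem z (t+1) (Fin.snoc m.2 u))
      = S.omem z t m.2 := by
    intro z
    rw [pre_omem]
    congr 1
    exact snoc_restrict m.2 u
  have h1 := congrArg (S.pre t (t+1) (Nat.le_succ t)) hy'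
  rw [hpre, hpre] at h1
  have h2 : S.omem y t m.2 = m := h1.trans hω
  exact ⟨h2, hy'⟩

lemma consistent_nxt_eq {t : ℕ} {m : S.Mem t} {u : S.U} {ω : ℕ → S.W}
    (hω : ω ∈ S.consistent t m) :
    {y ∈ S.consistent t m | S.nxt t m u y = S.nxt t m u ω}
      = S.consistent (t+1) (S.nxt t m u ω) := by
  ext y
  constructor
  · rintro ⟨-, hy⟩
    show S.omem y (t+1) ((S.nxt t m u ω).2) = S.nxt t m u ω
    exact hy
  · intro hy
    exact ⟨(S.consistent_nxt_mem hω hy).1, (S.consistent_nxt_mem hω hy).2⟩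

lemma Gset_eq {Ss : Type} (σ : (t : ℕ) → S.Mem t → Ss) (t : ℕ) (m : S.Mem t) (u : S.U)
    (ω : ℕ → S.W) :
    S.Gset σ t m u (S.oc ω t (Fin.snoc m.2 u)) (σ (t+1) (S.nxt t m u ω))
      = {y ∈ S.consistent t m |
          (fun y => (S.oc y t (Fin.snoc m.2 u), σ (t+1) (S.nxt t m u y))) y
            = (fun y => (S.oc y t (Fin.snoc m.2 u), σ (t+1) (S.nxt t m u y))) ω} := by
  ext y
  simp only [Gset, Set.mem_setOf_eq, Prod.mk.injEq]

/-- The second set appearing in `rcs` is the accrued range. -/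
lemma rcs_set2_eq (t : ℕ) (m : S.Mem t) :
    {a | a ∈ Set.Icc 0 S.amax ∧ ∃ ω ∈ S.consistent t m, S.oA ω t m.2 = a} = S.Arange t m := by
  ext a
  constructor
  · rintro ⟨-, ω, hω, rfl⟩
    exact ⟨ω, hω, rfl⟩
  · rintro ⟨ω, hω, rfl⟩
    exact ⟨⟨S.oA_nonneg _ _ _, S.oA_le_amax _ _ _⟩, ω, hω, rfl⟩

lemma rcs_set1_eq {Ss : Type} (σ : (t : ℕ) → S.Mem t → Ss) (t : ℕ) (m : S.Mem t) (u : S.U)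
    (c : ℝ) (s' : Ss) :
    {a | a ∈ Set.Icc 0 S.amax ∧ ∃ ω ∈ S.consistent t m,
        S.oc ω t (Fin.snoc m.2 u) = c ∧ σ (t+1) (S.omem ω (t+1) (Fin.snoc m.2 u)) = s' ∧
        S.oA ω t m.2 = a}
      = (fun y => S.oA y t m.2) '' S.Gset σ t m u c s' := by
  ext a
  constructor
  · rintro ⟨-, ω, hω, hc, hs, rfl⟩
    exact ⟨ω, ⟨hω, hc, hs⟩, rfl⟩
  · rintro ⟨ω, ⟨hω, hc, hs⟩, rfl⟩
    exact ⟨⟨S.oA_nonneg _ _ _, S.oA_le_amax _ _ _⟩, ω, hω, hc, hs, rfl⟩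

lemma Gset_bddAbove {Ss : Type} (σ : (t : ℕ) → S.Mem t → Ss) (t : ℕ) (m : S.Mem t) (u : S.U)
    (c : ℝ) (s' : Ss) : BddAbove ((fun y => S.oA y t m.2) '' S.Gset σ t m u c s') := by
  refine ⟨S.amax, ?_⟩
  rintro _ ⟨y, hy, rfl⟩
  exact S.oA_le_amax _ _ _

lemma rcs_char {Ss : Type} (σ : (t : ℕ) → S.Mem t → Ss) {t : ℕ} {m : S.Mem t} {u : S.U}
    {c : ℝ} {s' : Ss} (hm : (S.consistent t m).Nonempty)
    (hG : (S.Gset σ t m u c s').Nonempty) :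
    S.rcs σ t c s' m u
      = ((sSup ((fun y => S.oA y t m.2) '' S.Gset σ t m u c s')
          - sSup (S.Arange t m) : ℝ) : EReal) := by
  have hA1 : ((fun y => S.oA y t m.2) '' S.Gset σ t m u c s').Nonempty := hG.image _
  have hA2 : (S.Arange t m).Nonempty := hm.image _
  rw [Sys.rcs, S.rcs_set1_eq σ t m u c s', S.rcs_set2_eq t m]
  rw [EReal_sSup_coe_image ((fun y => S.oA y t m.2) '' S.Gset σ t m u c s') hA1
    (S.Gset_bddAbove σ t m u c s')]
  rw [EReal_sSup_coe_image (S.Arange t m) hA2 (S.Arange_bddAbove t m)]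
  rw [← EReal.coe_sub]

lemma rcs_bot {Ss : Type} (σ : (t : ℕ) → S.Mem t → Ss) {t : ℕ} {m : S.Mem t} {u : S.U}
    {c : ℝ} {s' : Ss} (hG : ¬ (S.Gset σ t m u c s').Nonempty) :
    S.rcs σ t c s' m u = ⊥ := by
  rw [Sys.rcs, S.rcs_set1_eq σ t m u c s']
  rw [Set.not_nonempty_iff_eq_empty] at hG
  rw [hG, Set.image_empty, Set.image_empty, sSup_empty, EReal_bot_sub]

/-! ### Value function lemmas -/

lemma Vval_bdd (g : S.Strat) (t : ℕ) (A : Set (ℕ → S.W)) :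
    BddAbove ((fun ω => S.cA g ω t + S.γ ^ t * S.cCinf g ω t) '' A) := by
  refine ⟨S.amax + S.γ ^ t * S.amax, ?_⟩
  rintro _ ⟨ω, hω, rfl⟩
  exact add_le_add (S.cA_le_amax g ω t)
    (mul_le_mul_of_nonneg_left (S.cCinf_le g ω t) (pow_nonneg S.gpos.le t))

lemma V_eq {g : S.Strat} {t : ℕ} {m : S.Mem t} (hg : ∃ ω0, S.memOf g ω0 t = m) :
    S.V g t m = sSup ((fun ω => S.oA ω t m.2 + S.γ ^ t * S.cCinf g ω t) ''
      S.consistent t m) := by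
  rw [Sys.V, S.closedset_eq hg]
  refine congrArg sSup (Set.image_congr fun ω hω => ?_)
  rw [S.cA_eq_oA (S.memOf_eq_of_consistent hg.choose_spec hω)]

lemma hm_of_hg {g : S.Strat} {t : ℕ} {m : S.Mem t} (hg : ∃ ω0, S.memOf g ω0 t = m) :
    (S.consistent t m).Nonempty :=
  ⟨hg.choose, S.mem_consistent_of_memOf hg.choose_spec⟩

lemma V_le_const {g : S.Strat} {t : ℕ} {m : S.Mem t} (hg : ∃ ω0, S.memOf g ω0 t = m) :
    S.V g t m ≤ sSup (S.Arange t m) + S.γ ^ t * S.amax := by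
  have hm := S.hm_of_hg hg
  rw [S.V_eq hg]
  refine csSup_le (hm.image _) ?_
  rintro _ ⟨ω, hω, rfl⟩
  refine add_le_add (le_csSup (S.Arange_bddAbove t m) ⟨ω, hω, rfl⟩)
    (mul_le_mul_of_nonneg_left (S.cCinf_le g ω t) (pow_nonneg S.gpos.le t))

lemma V_ge_const {g : S.Strat} {t : ℕ} {m : S.Mem t} (hg : ∃ ω0, S.memOf g ω0 t = m) :
    sSup (S.Arange t m) + S.γ ^ t * (S.cmin / (1 - S.γ)) ≤ S.V g t m := by
  have hm := S.hm_of_hg hg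
  rw [S.V_eq hg]
  have hb : BddAbove ((fun ω => S.oA ω t m.2 + S.γ ^ t * S.cCinf g ω t) ''
      S.consistent t m) := by
    refine ⟨S.amax + S.γ ^ t * S.amax, ?_⟩
    rintro _ ⟨ω, hω, rfl⟩
    exact add_le_add (S.oA_le_amax _ _ _)
      (mul_le_mul_of_nonneg_left (S.cCinf_le g ω t) (pow_nonneg S.gpos.le t))
  have h1 : sSup (S.Arange t m)
      ≤ sSup ((fun ω => S.oA ω t m.2 + S.γ ^ t * S.cCinf g ω t) '' S.consistent t m)
        - S.γ ^ t * (S.cmin / (1 - S.γ)) := by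
    refine csSup_le (hm.image _) ?_
    rintro _ ⟨ω, hω, rfl⟩
    have h2 := le_csSup hb (Set.mem_image_of_mem
      (fun ω => S.oA ω t m.2 + S.γ ^ t * S.cCinf g ω t) hω)
    have h3 : S.γ ^ t * (S.cmin / (1 - S.γ)) ≤ S.γ ^ t * S.cCinf g ω t :=
      mul_le_mul_of_nonneg_left (S.cCinf_ge g ω t) (pow_nonneg S.gpos.le t)
    dsimp only at h2 ⊢
    linarith
  linarith

lemma V_nonneg {g : S.Strat} {t : ℕ} {m : S.Mem t} (hg : ∃ ω0, S.memOf g ω0 t = m) :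
    0 ≤ S.V g t m := by
  have h1 := S.V_ge_const hg
  have h2 := S.sSup_Arange_nonneg t m (S.hm_of_hg hg)
  have h3 : 0 ≤ S.γ ^ t * (S.cmin / (1 - S.γ)) :=
    mul_nonneg (pow_nonneg S.gpos.le t) S.cdiv_nonneg
  linarith

lemma Vopt_bddBelow (t : ℕ) (m : S.Mem t) :
    BddBelow ((fun g => S.V g t m) '' {g : S.Strat | ∃ ω, S.memOf g ω t = m}) := by
  refine ⟨0, ?_⟩
  rintro _ ⟨g, hg, rfl⟩
  exact S.V_nonneg hg

lemma Vopt_le_V {g : S.Strat} {t : ℕ} {m : S.Mem t} (hg : ∃ ω, S.memOf g ω t = m) :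
    S.Vopt t m ≤ S.V g t m :=
  csInf_le (S.Vopt_bddBelow t m) ⟨g, hg, rfl⟩

lemma le_Vopt {t : ℕ} {m : S.Mem t} (hm : (S.consistent t m).Nonempty) (b : ℝ)
    (h : ∀ g : S.Strat, (∃ ω, S.memOf g ω t = m) → b ≤ S.V g t m) : b ≤ S.Vopt t m := by
  obtain ⟨g0, hg0⟩ := S.exists_admissible t m hm
  refine le_csInf ⟨S.V g0 t m, g0, hg0, rfl⟩ ?_
  rintro _ ⟨g, hg, rfl⟩
  exact h g hg

lemma Vopt_ub {t : ℕ} {m : S.Mem t} (hm : (S.consistent t m).Nonempty) :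
    S.Vopt t m ≤ sSup (S.Arange t m) + S.γ ^ t * S.amax := by
  obtain ⟨g0, hg0⟩ := S.exists_admissible t m hm
  exact le_trans (S.Vopt_le_V hg0) (S.V_le_const hg0)

lemma Vopt_lb {t : ℕ} {m : S.Mem t} (hm : (S.consistent t m).Nonempty) :
    sSup (S.Arange t m) + S.γ ^ t * (S.cmin / (1 - S.γ)) ≤ S.Vopt t m :=
  S.le_Vopt hm _ fun g hg => S.V_ge_const hg

lemma V_step {g : S.Strat} {t : ℕ} {m : S.Mem t} (hg : ∃ ω0, S.memOf g ω0 t = m) :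
    S.V g t m = sSup ((fun ω => S.V g (t+1) (S.memOf g ω (t+1))) '' S.consistent t m) := by
  have hK := S.hm_of_hg hg
  have hV : S.V g t m = sSup ((fun ω => S.cA g ω (t+1) + S.γ ^ (t+1) * S.cCinf g ω (t+1)) ''
      S.consistent t m) := by
    rw [Sys.V, S.closedset_eq hg]
    refine congrArg sSup (Set.image_congr fun ω hω => ?_)
    exact (S.val_succ g ω t).symm
  rw [hV]
  refine (group_sSup (S.consistent t m) hK _ _ (fun ω => S.memOf g ω (t+1))
    (S.Vval_bdd g (t+1) _) ?_).symm
  intro ω hω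
  have hset : {y | S.memOf g y (t+1) = S.memOf g ω (t+1)}
      = {y ∈ S.consistent t m | S.memOf g y (t+1) = S.memOf g ω (t+1)} := by
    ext y
    constructor
    · intro hy
      refine ⟨?_, hy⟩
      have h1 := congrArg (S.pre t (t+1) (Nat.le_succ t)) hy
      rw [pre_memOf, pre_memOf] at h1
      have h2 : S.memOf g ω t = m := S.memOf_eq_of_consistent hg.choose_spec hω
      exact S.mem_consistent_of_memOf (h1.trans h2)
    · exact fun hy => hy.2
  show S.V g (t+1) (S.memOf g ω (t+1)) = _
  rw [Sys.V, hset]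

end Sys


open Set

namespace Sys

variable (S : Sys)

lemma keyF1 {Ss : Type} (σ : (t : ℕ) → S.Mem t → Ss) (ρ : ℝ → Ss → Ss → S.U → EReal)
    (hinfo : ∀ (t : ℕ) (m : S.Mem t) (u : S.U) (c : ℝ) (s : Ss),
      S.rcs σ t c s m u = ρ c s (σ t m) u)
    (Λ : Ss → ℝ → ℝ) (t : ℕ) (m : S.Mem t) (hm : (S.consistent t m).Nonempty) (u : S.U)
    (hub : ∀ ω ∈ S.consistent t m, Λ (σ (t+1) (S.nxt t m u ω)) (S.γ * S.γ ^ t) ≤ S.amax)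
    (hlb : ∀ ω ∈ S.consistent t m, -S.amax ≤ Λ (σ (t+1) (S.nxt t m u ω)) (S.γ * S.γ ^ t)) :
    sSup ((fun ω => sSup (S.Arange (t+1) (S.nxt t m u ω))
        + (S.γ * S.γ ^ t) * Λ (σ (t+1) (S.nxt t m u ω)) (S.γ * S.γ ^ t)) '' S.consistent t m)
      = S.γ ^ t * sSup ((fun p : ℝ × Ss => p.1 + S.γ * Λ p.2 (S.γ * S.γ ^ t)
          + (ρ p.1 p.2 (σ t m) u).toReal / S.γ ^ t) '' {p | ρ p.1 p.2 (σ t m) u ≠ ⊥})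
        + sSup (S.Arange t m) := by
  have hγt : (0:ℝ) < S.γ ^ t := pow_pos S.gpos t
  have hγγt : (0:ℝ) ≤ S.γ * S.γ ^ t := mul_nonneg S.gpos.le hγt.le
  set K := S.consistent t m with hK
  set F : (ℕ → S.W) → ℝ := fun ω => S.oA ω t m.2 + S.γ ^ t * S.oc ω t (Fin.snoc m.2 u)
    + (S.γ * S.γ ^ t) * Λ (σ (t+1) (S.nxt t m u ω)) (S.γ * S.γ ^ t) with hF
  set pairf : (ℕ → S.W) → ℝ × Ss :=
    fun ω => (S.oc ω t (Fin.snoc m.2 u), σ (t+1) (S.nxt t m u ω)) with hpairf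
  set φ : ℝ × Ss → ℝ := fun p => p.1 + S.γ * Λ p.2 (S.γ * S.γ ^ t)
    + (ρ p.1 p.2 (σ t m) u).toReal / S.γ ^ t with hφ
  have hFbdd : BddAbove (F '' K) := by
    refine ⟨S.amax + S.γ ^ t * S.cmax + (S.γ * S.γ ^ t) * S.amax, ?_⟩
    rintro _ ⟨ω, hω, rfl⟩
    refine add_le_add (add_le_add (S.oA_le_amax _ _ _)
      (mul_le_mul_of_nonneg_left (S.oc_mem _ _ _).2 hγt.le))
      (mul_le_mul_of_nonneg_left (hub ω hω) hγγt)
  -- Claim 1 : group by next memory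
  have claim1 : sSup ((fun ω => sSup (S.Arange (t+1) (S.nxt t m u ω))
      + (S.γ * S.γ ^ t) * Λ (σ (t+1) (S.nxt t m u ω)) (S.γ * S.γ ^ t)) '' K)
      = sSup (F '' K) := by
    refine group_sSup K hm F _ (fun ω => S.nxt t m u ω) hFbdd ?_
    intro ω hω
    rw [S.consistent_nxt_eq hω]
    have himg : F '' S.consistent (t+1) (S.nxt t m u ω)
        = (fun y => S.oA y (t+1) (Fin.snoc m.2 u)
            + (S.γ * S.γ ^ t) * Λ (σ (t+1) (S.nxt t m u ω)) (S.γ * S.γ ^ t)) ''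
          S.consistent (t+1) (S.nxt t m u ω) := by
      refine Set.image_congr fun y hy => ?_
      have h2 := (S.consistent_nxt_mem hω hy).2
      rw [hF]
      dsimp only
      rw [S.oA_snoc, h2]
    have himg2 : (fun y => S.oA y (t+1) (Fin.snoc m.2 u)
        + (S.γ * S.γ ^ t) * Λ (σ (t+1) (S.nxt t m u ω)) (S.γ * S.γ ^ t)) ''
          S.consistent (t+1) (S.nxt t m u ω)
        = (fun x => x + (S.γ * S.γ ^ t) * Λ (σ (t+1) (S.nxt t m u ω)) (S.γ * S.γ ^ t)) ''
          S.Arange (t+1) (S.nxt t m u ω) := by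
      have hAr : S.Arange (t+1) (S.nxt t m u ω)
          = (fun y => S.oA y (t+1) (Fin.snoc m.2 u)) ''
            S.consistent (t+1) (S.nxt t m u ω) := rfl
      rw [hAr, Set.image_image]
    have hne : (S.Arange (t+1) (S.nxt t m u ω)).Nonempty :=
      ⟨_, ⟨ω, S.mem_consistent_nxt t m u ω, rfl⟩⟩
    rw [himg, himg2, csSup_add_const _ hne (S.Arange_bddAbove (t+1) (S.nxt t m u ω))]
  -- Claim 2 : group by (cost, next info-state)
  have claim2 : sSup ((fun ω => S.γ ^ t * φ (pairf ω) + sSup (S.Arange t m)) '' K)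
      = sSup (F '' K) := by
    refine group_sSup K hm F _ pairf hFbdd ?_
    intro ω hω
    have hGeq : {y ∈ K | pairf y = pairf ω}
        = S.Gset σ t m u (S.oc ω t (Fin.snoc m.2 u)) (σ (t+1) (S.nxt t m u ω)) :=
      (S.Gset_eq σ t m u ω).symm
    have hGne : (S.Gset σ t m u (S.oc ω t (Fin.snoc m.2 u))
        (σ (t+1) (S.nxt t m u ω))).Nonempty := ⟨ω, hω, rfl, rfl⟩
    have hrcs : (ρ (S.oc ω t (Fin.snoc m.2 u)) (σ (t+1) (S.nxt t m u ω)) (σ t m) u).toReal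
        = sSup ((fun y => S.oA y t m.2) '' S.Gset σ t m u (S.oc ω t (Fin.snoc m.2 u))
            (σ (t+1) (S.nxt t m u ω))) - sSup (S.Arange t m) := by
      rw [← hinfo, S.rcs_char σ hm hGne, EReal.toReal_coe]
    have himg : F '' S.Gset σ t m u (S.oc ω t (Fin.snoc m.2 u)) (σ (t+1) (S.nxt t m u ω))
        = (fun y => S.oA y t m.2 + (S.γ ^ t * S.oc ω t (Fin.snoc m.2 u)
            + (S.γ * S.γ ^ t) * Λ (σ (t+1) (S.nxt t m u ω)) (S.γ * S.γ ^ t))) ''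
          S.Gset σ t m u (S.oc ω t (Fin.snoc m.2 u)) (σ (t+1) (S.nxt t m u ω)) := by
      refine Set.image_congr fun y hy => ?_
      obtain ⟨hyK, hc, hs⟩ := hy
      rw [hF]
      dsimp only
      rw [hc, hs]
      ring
    rw [hGeq, himg, csSup_image_add_const (fun y => S.oA y t m.2) _ _ hGne
      (S.Gset_bddAbove σ t m u _ _)]
    rw [hφ]
    dsimp only [hpairf]
    rw [hrcs]
    field_simp
    ring
  rw [claim1, ← claim2]
  -- now rewrite the LHS image as affine image
  have himg3 : (fun ω => S.γ ^ t * φ (pairf ω) + sSup (S.Arange t m)) '' K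
      = (fun x => S.γ ^ t * x + sSup (S.Arange t m)) '' (φ '' (pairf '' K)) := by
    rw [Set.image_image, Set.image_image]
  have hT : pairf '' K = {p : ℝ × Ss | ρ p.1 p.2 (σ t m) u ≠ ⊥} := by
    ext p
    constructor
    · rintro ⟨ω, hω, rfl⟩
      show ρ _ _ (σ t m) u ≠ ⊥
      rw [← hinfo]
      rw [S.rcs_char σ hm ⟨ω, hω, rfl, rfl⟩]
      exact EReal.coe_ne_bot _
    · intro hp
      rcases Set.eq_empty_or_nonempty (S.Gset σ t m u p.1 p.2) with hG | hG
      · exfalso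
        apply hp
        rw [← hinfo]
        exact S.rcs_bot σ (by rw [hG]; exact Set.not_nonempty_empty)
      · obtain ⟨y, hy, hc, hs⟩ := hG
        exact ⟨y, hy, Prod.ext hc hs⟩
  have hφbdd : BddAbove (φ '' (pairf '' K)) := by
    refine ⟨S.cmax + S.γ * S.amax + 0, ?_⟩
    rintro _ ⟨_, ⟨ω, hω, rfl⟩, rfl⟩
    rw [hφ]
    dsimp only [hpairf]
    have h1 : S.oc ω t (Fin.snoc m.2 u) ≤ S.cmax := (S.oc_mem _ _ _).2
    have h2 : S.γ * Λ (σ (t+1) (S.nxt t m u ω)) (S.γ * S.γ ^ t) ≤ S.γ * S.amax :=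
      mul_le_mul_of_nonneg_left (hub ω hω) S.gpos.le
    have h3 : (ρ (S.oc ω t (Fin.snoc m.2 u)) (σ (t+1) (S.nxt t m u ω)) (σ t m) u).toReal
        / S.γ ^ t ≤ 0 := by
      have hGne : (S.Gset σ t m u (S.oc ω t (Fin.snoc m.2 u))
          (σ (t+1) (S.nxt t m u ω))).Nonempty := ⟨ω, hω, rfl, rfl⟩
      have hrcs : (ρ (S.oc ω t (Fin.snoc m.2 u)) (σ (t+1) (S.nxt t m u ω)) (σ t m) u).toReal
          = sSup ((fun y => S.oA y t m.2) '' S.Gset σ t m u (S.oc ω t (Fin.snoc m.2 u))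
              (σ (t+1) (S.nxt t m u ω))) - sSup (S.Arange t m) := by
        rw [← hinfo, S.rcs_char σ hm hGne, EReal.toReal_coe]
      have hsub : sSup ((fun y => S.oA y t m.2) '' S.Gset σ t m u
          (S.oc ω t (Fin.snoc m.2 u)) (σ (t+1) (S.nxt t m u ω))) ≤ sSup (S.Arange t m) := by
        refine csSup_le_csSup (S.Arange_bddAbove t m) (hGne.image _) ?_
        rintro _ ⟨y, hy, rfl⟩
        exact ⟨y, hy.1, rfl⟩
      rw [hrcs]
      exact div_nonpos_of_nonpos_of_nonneg (by linarith) hγt.le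
    linarith
  have hφne : (φ '' (pairf '' K)).Nonempty := ((hm.image pairf).image φ)
  rw [himg3]
  rw [hT] at hφne hφbdd ⊢
  exact csSup_smul_add (S.γ ^ t) (sSup (S.Arange t m)) hγt _ hφne hφbdd

end Sys


open Set

namespace Sys

variable (S : Sys)

set_option maxHeartbeats 1600000 in
theorem main_ind {Ss : Type} (σ : (t : ℕ) → S.Mem t → Ss)
    (ρ : ℝ → Ss → Ss → S.U → EReal)
    (hinfo : ∀ (t : ℕ) (m : S.Mem t) (u : S.U) (c : ℝ) (s : Ss),
      S.rcs σ t c s m u = ρ c s (σ t m) u) :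
    ∀ (n t : ℕ) (m : S.Mem t), (S.consistent t m).Nonempty →
      S.γ ^ (n+t) * S.cmin / (1 - S.γ) + S.γ ^ t * DPopIter S.γ ρ n (σ t m) (S.γ ^ t)
        + sSup (S.Arange t m) ≤ S.Vopt t m ∧
      S.Vopt t m ≤ sSup (S.Arange t m) + S.γ ^ t * DPopIter S.γ ρ n (σ t m) (S.γ ^ t)
        + S.γ ^ (n+t) * S.cmax / (1 - S.γ) := by
  intro n
  induction n with
  | zero =>
    intro t m hm
    have h1 := S.Vopt_lb hm
    have h2 := S.Vopt_ub hm
    have e2 : S.γ ^ t * (S.cmin / (1 - S.γ)) = S.γ ^ t * S.cmin / (1 - S.γ) := by ring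
    have e3 : S.γ ^ t * S.amax = S.γ ^ t * S.cmax / (1 - S.γ) := by
      rw [Sys.amax]; ring
    simp only [DPopIter, Nat.zero_add, mul_zero]
    constructor
    · linarith
    · linarith
  | succ n ih =>
    intro t m hm
    have hγt : (0:ℝ) < S.γ ^ t := pow_pos S.gpos t
    have hγt1 : (0:ℝ) < S.γ * S.γ ^ t := mul_pos S.gpos hγt
    have hpow : S.γ ^ (t+1) = S.γ * S.γ ^ t := pow_succ' S.γ t
    set α := sSup (S.Arange t m) with hαdef
    set Λn := DPopIter S.γ ρ n with hΛn
    set Ψ : S.U → ℝ := fun u => sSup ((fun p : ℝ × Ss =>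
      p.1 + S.γ * Λn p.2 (S.γ * S.γ ^ t) + (ρ p.1 p.2 (σ t m) u).toReal / S.γ ^ t) ''
      {p | ρ p.1 p.2 (σ t m) u ≠ ⊥}) with hΨ
    have hDP : DPopIter S.γ ρ (n+1) (σ t m) (S.γ ^ t) = sInf (Set.range Ψ) := rfl
    -- Λ bounds at reachable states
    have hub : ∀ u : S.U, ∀ ω ∈ S.consistent t m,
        Λn (σ (t+1) (S.nxt t m u ω)) (S.γ * S.γ ^ t) ≤ S.amax := by
      intro u ω hω
      have hm' : (S.consistent (t+1) (S.nxt t m u ω)).Nonempty :=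
        ⟨ω, S.mem_consistent_nxt t m u ω⟩
      have h1 := (ih (t+1) (S.nxt t m u ω) hm').1
      have h2 := S.Vopt_ub hm'
      rw [hpow] at h1 h2
      have h3 : 0 ≤ S.γ ^ (n+(t+1)) * S.cmin / (1 - S.γ) :=
        div_nonneg (mul_nonneg (pow_nonneg S.gpos.le _) S.hcmin) S.one_sub_pos.le
      have h4 : (S.γ * S.γ ^ t) * Λn (σ (t+1) (S.nxt t m u ω)) (S.γ * S.γ ^ t)
          ≤ (S.γ * S.γ ^ t) * S.amax := by linarith
      exact (mul_le_mul_iff_right₀ hγt1).mp h4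
    have hlb : ∀ u : S.U, ∀ ω ∈ S.consistent t m,
        -S.amax ≤ Λn (σ (t+1) (S.nxt t m u ω)) (S.γ * S.γ ^ t) := by
      intro u ω hω
      have hm' : (S.consistent (t+1) (S.nxt t m u ω)).Nonempty :=
        ⟨ω, S.mem_consistent_nxt t m u ω⟩
      have h1 := (ih (t+1) (S.nxt t m u ω) hm').2
      have h2 := S.Vopt_lb hm'
      rw [hpow] at h1 h2
      have hamax : S.cmax / (1 - S.γ) = S.amax := rfl
      have h3 : S.γ ^ (n+(t+1)) * S.cmax / (1 - S.γ) ≤ (S.γ * S.γ ^ t) * S.amax := by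
        have e : S.γ ^ (n+(t+1)) = S.γ ^ n * (S.γ * S.γ ^ t) := by rw [pow_add, hpow]
        have hγn : S.γ ^ n ≤ 1 := pow_le_one₀ S.gpos.le S.hγ1.le
        have h4 : 0 ≤ (S.γ * S.γ ^ t) * S.amax := mul_nonneg hγt1.le S.amax_nonneg
        calc S.γ ^ (n+(t+1)) * S.cmax / (1 - S.γ)
            = S.γ ^ n * ((S.γ * S.γ ^ t) * S.amax) := by rw [e, ← hamax]; ring
          _ ≤ 1 * ((S.γ * S.γ ^ t) * S.amax) := mul_le_mul_of_nonneg_right hγn h4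
          _ = (S.γ * S.γ ^ t) * S.amax := one_mul _
      have h5 : 0 ≤ (S.γ * S.γ ^ t) * (S.cmin / (1 - S.γ)) :=
        mul_nonneg hγt1.le S.cdiv_nonneg
      have h6 : (S.γ * S.γ ^ t) * (-S.amax) = -((S.γ * S.γ ^ t) * S.amax) := by ring
      have h7 : (S.γ * S.γ ^ t) * (-S.amax)
          ≤ (S.γ * S.γ ^ t) * Λn (σ (t+1) (S.nxt t m u ω)) (S.γ * S.γ ^ t) := by linarith
      exact (mul_le_mul_iff_right₀ hγt1).mp h7
    set L : S.U → (ℕ → S.W) → ℝ := fun u ω => sSup (S.Arange (t+1) (S.nxt t m u ω))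
        + (S.γ * S.γ ^ t) * Λn (σ (t+1) (S.nxt t m u ω)) (S.γ * S.γ ^ t) with hL
    have key : ∀ u : S.U, sSup (L u '' S.consistent t m) = S.γ ^ t * Ψ u + α :=
      fun u => S.keyF1 σ ρ hinfo Λn t m hm u (hub u) (hlb u)
    have hLbdd : ∀ u : S.U, BddAbove (L u '' S.consistent t m) := by
      intro u
      refine ⟨S.amax + (S.γ * S.γ ^ t) * S.amax, ?_⟩
      rintro _ ⟨ω, hω, rfl⟩
      rw [hL]
      dsimp only
      exact add_le_add (S.sSup_Arange_le _ _ ⟨ω, S.mem_consistent_nxt t m u ω⟩)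
        (mul_le_mul_of_nonneg_left (hub u ω hω) hγt1.le)
    have hLlow : ∀ u : S.U, ∀ ω ∈ S.consistent t m, (S.γ * S.γ ^ t) * (-S.amax) ≤ L u ω := by
      intro u ω hω
      rw [hL]
      dsimp only
      have h1 := S.sSup_Arange_nonneg (t+1) (S.nxt t m u ω) ⟨ω, S.mem_consistent_nxt t m u ω⟩
      have h2 := mul_le_mul_of_nonneg_left (hlb u ω hω) hγt1.le
      linarith
    have hΨbdd : BddBelow (Set.range Ψ) := by
      refine ⟨((S.γ * S.γ ^ t) * (-S.amax) - α) / S.γ ^ t, ?_⟩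
      rintro _ ⟨u, rfl⟩
      have hkey := key u
      obtain ⟨ω0, hω0⟩ := hm
      have h1 : (S.γ * S.γ ^ t) * (-S.amax) ≤ sSup (L u '' S.consistent t m) :=
        le_trans (hLlow u ω0 hω0) (le_csSup (hLbdd u) ⟨ω0, hω0, rfl⟩)
      rw [hkey] at h1
      rw [div_le_iff₀ hγt]
      linarith
    have hexp : S.γ ^ (n+1+t) = S.γ ^ (n+(t+1)) := by
      rw [show n+1+t = n+(t+1) by omega]
    constructor
    · -- lower bound
      rw [hDP, hexp]
      refine S.le_Vopt hm _ ?_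
      intro g hg
      set u := g t m with hu
      have hVs := S.V_step hg
      have himg : (fun ω => S.V g (t+1) (S.memOf g ω (t+1))) '' S.consistent t m
          = (fun ω => S.V g (t+1) (S.nxt t m u ω)) '' S.consistent t m :=
        Set.image_congr fun ω hω => by
          rw [S.memOf_succ hg.choose_spec hω]
          exact rfl
      rw [himg] at hVs
      have hHbdd : BddAbove ((fun ω => S.V g (t+1) (S.nxt t m u ω)) '' S.consistent t m) := by
        refine ⟨S.amax + S.γ ^ (t+1) * S.amax, ?_⟩
        rintro _ ⟨ω, hω, rfl⟩
        have hg' : ∃ ω', S.memOf g ω' (t+1) = S.nxt t m u ω :=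
          ⟨ω, S.memOf_succ hg.choose_spec hω⟩
        refine le_trans (S.V_le_const hg') ?_
        have h0 := S.sSup_Arange_le (t+1) (S.nxt t m u ω) ⟨ω, S.mem_consistent_nxt t m u ω⟩
        linarith
      have hpoint : ∀ ω ∈ S.consistent t m,
          L u ω + S.γ ^ (n+(t+1)) * S.cmin / (1 - S.γ) ≤ S.V g (t+1) (S.nxt t m u ω) := by
        intro ω hω
        have hm' : (S.consistent (t+1) (S.nxt t m u ω)).Nonempty :=
          ⟨ω, S.mem_consistent_nxt t m u ω⟩
        have h1 := (ih (t+1) (S.nxt t m u ω) hm').1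
        rw [hpow] at h1
        have hg' : ∃ ω', S.memOf g ω' (t+1) = S.nxt t m u ω :=
          ⟨ω, S.memOf_succ hg.choose_spec hω⟩
        have h2 := S.Vopt_le_V hg'
        rw [hL]
        dsimp only
        linarith
      have h3 : sSup ((fun ω => L u ω + S.γ ^ (n+(t+1)) * S.cmin / (1 - S.γ)) ''
          S.consistent t m) ≤ S.V g t m := by
        rw [hVs]
        refine csSup_le (hm.image _) ?_
        rintro _ ⟨ω, hω, rfl⟩
        exact le_trans (hpoint ω hω) (le_csSup hHbdd ⟨ω, hω, rfl⟩)
      rw [csSup_image_add_const (L u) _ _ hm (hLbdd u), key u] at h3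
      have h6 : sInf (Set.range Ψ) ≤ Ψ u := csInf_le hΨbdd ⟨u, rfl⟩
      have h7 : S.γ ^ t * sInf (Set.range Ψ) ≤ S.γ ^ t * Ψ u :=
        mul_le_mul_of_nonneg_left h6 hγt.le
      linarith
    · -- upper bound
      rw [hDP, hexp]
      refine le_of_forall_pos_le_add ?_
      intro ε hε
      have hε2 : (0:ℝ) < ε / (2 * S.γ ^ t) := div_pos hε (mul_pos two_pos hγt)
      obtain ⟨x, hx, hxlt⟩ := Real.lt_sInf_add_pos
        (⟨Ψ (Classical.arbitrary S.U), ⟨Classical.arbitrary S.U, rfl⟩⟩ :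
          (Set.range Ψ).Nonempty) hε2
      obtain ⟨u, rfl⟩ := hx
      have hch : ∀ M : S.Mem (t+1), ∃ g : S.Strat, (S.consistent (t+1) M).Nonempty →
          ((∃ ω, S.memOf g ω (t+1) = M) ∧ S.V g (t+1) M < S.Vopt (t+1) M + ε/2) := by
        intro M
        by_cases hne : (S.consistent (t+1) M).Nonempty
        · have hSne : ((fun g => S.V g (t+1) M) ''
              {g : S.Strat | ∃ ω, S.memOf g ω (t+1) = M}).Nonempty := by
            obtain ⟨g0, hg0⟩ := S.exists_admissible (t+1) M hne
            exact ⟨_, g0, hg0, rfl⟩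
          obtain ⟨v, ⟨g1, hg1, rfl⟩, hv⟩ := Real.lt_sInf_add_pos hSne (half_pos hε)
          exact ⟨g1, fun _ => ⟨hg1, hv⟩⟩
        · exact ⟨fun _ _ => Classical.arbitrary S.U, fun h => absurd h hne⟩
      choose gsel hgsel using hch
      set gs : S.Strat := fun s M => if h : t+1 ≤ s then gsel (S.pre (t+1) s h M) s M
          else if h2 : s < t then m.2 ⟨s, h2⟩ else u with hgs
      have hgm : ∀ ω ∈ S.consistent t m, S.memOf gs ω t = m := by
        intro ω hω
        refine S.memOf_eq_of_consistent' ?_ hω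
        intro s hs
        simp only [hgs]
        rw [dif_neg (by omega), dif_pos hs]
      have hgt : gs t m = u := by
        simp only [hgs]
        rw [dif_neg (by omega), dif_neg (lt_irrefl t)]
      have hwit : ∃ ω0, S.memOf gs ω0 t = m := ⟨hm.choose, hgm _ hm.choose_spec⟩
      have hnxt : ∀ ω ∈ S.consistent t m, S.memOf gs ω (t+1) = S.nxt t m u ω := by
        intro ω hω
        have h1 := S.memOf_succ hwit.choose_spec hω
        rw [hgt] at h1
        exact h1
      have hpoint2 : ∀ ω ∈ S.consistent t m, S.V gs (t+1) (S.nxt t m u ω)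
          ≤ L u ω + (S.γ ^ (n+(t+1)) * S.cmax / (1 - S.γ) + ε/2) := by
        intro ω hω
        have hm' : (S.consistent (t+1) (S.nxt t m u ω)).Nonempty :=
          ⟨ω, S.mem_consistent_nxt t m u ω⟩
        obtain ⟨hselw, hselv⟩ := hgsel (S.nxt t m u ω) hm'
        have hagree : ∀ s (M : S.Mem s) (h : t+1 ≤ s),
            S.pre (t+1) s h M = S.nxt t m u ω → gs s M = gsel (S.nxt t m u ω) s M := by
          intro s M h hpre
          simp only [hgs]
          rw [dif_pos h, hpre]
        have hVc : S.V gs (t+1) (S.nxt t m u ω)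
            = S.V (gsel (S.nxt t m u ω)) (t+1) (S.nxt t m u ω) :=
          S.V_congr ⟨ω, hnxt ω hω⟩ hselw hagree
        have h1 := (ih (t+1) (S.nxt t m u ω) hm').2
        rw [hpow] at h1
        rw [hVc, hL]
        dsimp only
        linarith
      have hVs := S.V_step hwit
      have himg : (fun ω => S.V gs (t+1) (S.memOf gs ω (t+1))) '' S.consistent t m
          = (fun ω => S.V gs (t+1) (S.nxt t m u ω)) '' S.consistent t m :=
        Set.image_congr fun ω hω => by rw [hnxt ω hω]
      rw [himg] at hVs
      have hLbdd2 : BddAbove ((fun ω => L u ω + (S.γ ^ (n+(t+1)) * S.cmax / (1 - S.γ) + ε/2))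
          '' S.consistent t m) := bddAbove_image_add_const (L u) _ _ (hLbdd u)
      have h3 : S.V gs t m ≤ sSup ((fun ω => L u ω +
          (S.γ ^ (n+(t+1)) * S.cmax / (1 - S.γ) + ε/2)) '' S.consistent t m) := by
        rw [hVs]
        refine csSup_le (hm.image _) ?_
        rintro _ ⟨ω, hω, rfl⟩
        exact le_trans (hpoint2 ω hω) (le_csSup hLbdd2 ⟨ω, hω, rfl⟩)
      rw [csSup_image_add_const (L u) _ _ hm (hLbdd u), key u] at h3
      have h4 := S.Vopt_le_V hwit
      have h5 : S.γ ^ t * Ψ u ≤ S.γ ^ t * (sInf (Set.range Ψ) + ε / (2 * S.γ ^ t)) :=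
        mul_le_mul_of_nonneg_left hxlt.le hγt.le
      have h6 : S.γ ^ t * (sInf (Set.range Ψ) + ε / (2 * S.γ ^ t))
          = S.γ ^ t * sInf (Set.range Ψ) + ε/2 := by
        field_simp
      linarith

end Sys



theorem stmt5 (S : Sys) {Ss : Type} [Nonempty Ss] [MetricSpace Ss]
    (hSb : Bornology.IsBounded (Set.univ : Set Ss))
    (σ : (t : ℕ) → S.Mem t → Ss) (ρ : ℝ → Ss → Ss → S.U → EReal)
    (hρ : ∀ c s' s u, ρ c s' s u = ⊥ ∨
      ∃ x : ℝ, ρ c s' s u = (x : EReal) ∧ x ∈ Set.Icc (-S.amax) 0)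
    (hinfo : ∀ (t : ℕ) (m : S.Mem t) (u : S.U) (c : ℝ) (s : Ss),
      S.rcs σ t c s m u = ρ c s (σ t m) u)
    (n t : ℕ) (m : S.Mem t) (hm : (S.consistent t m).Nonempty) :
    S.γ ^ (n+t) * S.cmin / (1 - S.γ) + S.γ ^ t * DPopIter S.γ ρ n (σ t m) (S.γ ^ t)
        + sSup (S.Arange t m) ≤ S.Vopt t m ∧
      S.Vopt t m ≤ sSup (S.Arange t m) + S.γ ^ t * DPopIter S.γ ρ n (σ t m) (S.γ ^ t)
        + S.γ ^ (n+t) * S.cmax / (1 - S.γ) := by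
  exact S.main_ind σ ρ hinfo n t m hm
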